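/- Let p be a prime, l ≥ 1, m = p^l + 1, and j_1, ..., j_m ≥ 1 integers. Then v_p(j_1! · j_2! ⋯ j_m!) ≥ v_p(⌊(j_1 + ... + j_m)/p^l⌋). -/

import Mathlib

open Nat Finset

private lemma aux_numeric (p l w : ℕ) (hp : 2 ≤ p) (hl : 1 ≤ l) :
    (p - 1) * (2 * w + 1 + p ^ l) < p ^ l * p ^ (w + 1) := by
  obtain ⟨q, rfl⟩ : ∃ q, p = q + 2 := ⟨p - 2, by omega⟩
  have hpl : q + 2 ≤ (q + 2) ^ l := Nat.le_self_pow (by omega) _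
  have hsub : q + 2 - 1 = q + 1 := by omega
  induction w with
  | zero =>
    have h1 : (q + 2) ^ (0 + 1) = q + 2 := by ring
    rw [h1, hsub]
    have hgoal : (q + 1) * (2 * 0 + 1 + (q + 2) ^ l) = (q + 1) + (q + 1) * (q + 2) ^ l := by ring
    have hrhs : (q + 2) ^ l * (q + 2) = (q + 1) * (q + 2) ^ l + (q + 2) ^ l := by ring
    omega
  | succ w ih =>
    have h2 : 2 ≤ (q + 2) ^ (w + 1) := le_trans (by omega) (Nat.le_self_pow (by omega) _)
    have hexp : (q + 2) ^ l * (q + 2) ^ (w + 1 + 1)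
        = (q + 2) ^ l * (q + 2) ^ (w + 1) + (q + 1) * ((q + 2) ^ l * (q + 2) ^ (w + 1)) := by
      ring
    have hAB : 2 * 2 ≤ (q + 2) ^ l * (q + 2) ^ (w + 1) :=
      Nat.mul_le_mul (by omega) h2
    have hlhs : (q + 1) * (2 * (w + 1) + 1 + (q + 2) ^ l)
        = (q + 1) * (2 * w + 1 + (q + 2) ^ l) + 2 * (q + 1) := by ring
    have hrhs : 2 * (q + 1) ≤ (q + 1) * ((q + 2) ^ l * (q + 2) ^ (w + 1)) := by
      calc 2 * (q + 1) = (q + 1) * 2 := by ring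
      _ ≤ (q + 1) * ((q + 2) ^ l * (q + 2) ^ (w + 1)) :=
          Nat.mul_le_mul_left _ (by omega)
    rw [hsub] at ih ⊢
    omega

/-- log p n ≤ padicValNat p n! for n ≥ 1 -/
private lemma aux_log_le (p n : ℕ) (hp : p.Prime) (hn : 1 ≤ n) :
    Nat.log p n ≤ padicValNat p n.factorial := by
  haveI : Fact p.Prime := ⟨hp⟩
  rw [padicValNat_factorial (Nat.lt_succ_self (Nat.log p n))]
  calc Nat.log p n = ∑ _i ∈ Finset.Ico 1 (Nat.log p n + 1), 1 := by simp
  _ ≤ ∑ i ∈ Finset.Ico 1 (Nat.log p n + 1), n / p ^ i := by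
      apply Finset.sum_le_sum
      intro i hi
      simp only [Finset.mem_Ico] at hi
      have h1 : p ^ i ≤ n := le_trans (Nat.pow_le_pow_right hp.one_lt.le (by omega))
        (Nat.pow_log_le_self p (by omega))
      exact Nat.one_le_div_iff (Nat.pow_pos hp.pos) |>.mpr h1

private lemma aux_digit_sum (p n : ℕ) (hp : p.Prime) (hn : 1 ≤ n) :
    (p.digits n).sum ≤ (p - 1) * (padicValNat p n.factorial + 1) := by
  have hlen : (p.digits n).length = Nat.log p n + 1 :=
    Nat.digits_len p n hp.one_lt (by omega)
  have hsum : (p.digits n).sum ≤ (p - 1) * (p.digits n).length := by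
    calc (p.digits n).sum ≤ (p.digits n).length * (p - 1) := by
          apply List.sum_le_card_nsmul
          intro x hx
          have := Nat.digits_lt_base hp.one_lt hx
          omega
    _ = (p - 1) * (p.digits n).length := by ring
  calc (p.digits n).sum ≤ (p - 1) * (Nat.log p n + 1) := by rw [← hlen]; exact hsum
  _ ≤ (p - 1) * (padicValNat p n.factorial + 1) := by
      apply Nat.mul_le_mul_left
      have := aux_log_le p n hp hn
      omega

theorem stmt_4 (p l : ℕ) (hp : p.Prime) (hl : 1 ≤ l)
    (j : Fin (p ^ l + 1) → ℕ) (hj : ∀ i, 1 ≤ j i) :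
    padicValNat p ((∑ i, j i) / p ^ l) ≤ padicValNat p (∏ i, Nat.factorial (j i)) := by
  haveI : Fact p.Prime := ⟨hp⟩
  have hp2 : 2 ≤ p := hp.two_le
  set S := ∑ i, j i with hSdef
  by_contra hcon
  push_neg at hcon
  set V := padicValNat p (∏ i, Nat.factorial (j i)) with hVdef
  set v := padicValNat p (S / p ^ l) with hvdef
  -- V = sum of padicValNat of factorials
  have hV : V = ∑ i, padicValNat p (Nat.factorial (j i)) := by
    rw [hVdef, ← Nat.factorization_def _ hp,
      Nat.factorization_prod (fun i _ => Nat.factorial_ne_zero (j i))]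
    rw [Finsupp.finset_sum_apply]
    exact Finset.sum_congr rfl fun i _ => (Nat.factorization_def _ hp)
  -- Legendre for each i
  have hleg : ∀ i, (p - 1) * padicValNat p (Nat.factorial (j i)) + (p.digits (j i)).sum
      = j i := by
    intro i
    have h1 := sub_one_mul_padicValNat_factorial (p := p) (j i)
    have h2 := Nat.digit_sum_le p (j i)
    omega
  -- summing
  have hsum : (p - 1) * V + ∑ i, (p.digits (j i)).sum = S := by
    rw [hV, Finset.mul_sum, ← Finset.sum_add_distrib]
    exact Finset.sum_congr rfl fun i _ => hleg i
  -- bound on digit sums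
  have hds : ∑ i, (p.digits (j i)).sum ≤ (p - 1) * (V + (p ^ l + 1)) := by
    calc ∑ i, (p.digits (j i)).sum
        ≤ ∑ i, (p - 1) * (padicValNat p (Nat.factorial (j i)) + 1) :=
          Finset.sum_le_sum fun i _ => aux_digit_sum p (j i) hp (hj i)
    _ = (p - 1) * (V + (p ^ l + 1)) := by
        rw [← Finset.mul_sum, hV]
        congr 1
        rw [Finset.sum_add_distrib]
        simp [Finset.card_univ]
  have hS_le : S ≤ (p - 1) * (2 * V + 1 + p ^ l) := by
    have : (p - 1) * (2 * V + 1 + p ^ l) = (p - 1) * V + (p - 1) * (V + (p ^ l + 1)) := by ring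
    omega
  -- lower bound on S
  have hSm : p ^ l + 1 ≤ S := by
    calc p ^ l + 1 = ∑ _i : Fin (p ^ l + 1), 1 := by simp
    _ ≤ S := Finset.sum_le_sum fun i _ => hj i
  have hq_ne : S / p ^ l ≠ 0 := by
    have : p ^ l ≤ S := by omega
    have := Nat.one_le_div_iff (Nat.pow_pos hp.pos) |>.mpr this
    omega
  have hpv : p ^ v ≤ S / p ^ l :=
    Nat.le_of_dvd (Nat.pos_of_ne_zero hq_ne) pow_padicValNat_dvd
  have hS_ge : p ^ l * p ^ v ≤ S := by
    calc p ^ l * p ^ v ≤ p ^ l * (S / p ^ l) := Nat.mul_le_mul_left _ hpv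
    _ ≤ S := Nat.mul_div_le S (p ^ l) |>.trans_eq rfl |>.trans_eq rfl
  -- contradiction
  obtain ⟨w, hw⟩ : ∃ w, v = w + 1 := ⟨v - 1, by omega⟩
  have hVw : V ≤ w := by omega
  have := aux_numeric p l w hp2 hl
  have hmono : (p - 1) * (2 * V + 1 + p ^ l) ≤ (p - 1) * (2 * w + 1 + p ^ l) :=
    Nat.mul_le_mul_left _ (by omega)
  rw [hw] at hS_ge
  omega
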